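/- For a simple random walk on a finite tree, all hitting times H(x,y) are integers. -/

import Mathlib

open SimpleGraph Finset

universe u

lemma tree_key (n : ℕ) : ∀ {V : Type u} [Fintype V] [DecidableEq V]
    (T : SimpleGraph V) [DecidableRel T.Adj], Fintype.card V = n + 1 → T.Connected →
    T.edgeFinset.card = n → ∀ (a : V) (c : V → ℤ) (H : V → ℝ), H a = 0 →
    (∀ x, x ≠ a → (T.degree x : ℝ) * H x = (c x : ℝ) + ∑ y ∈ T.neighborFinset x, H y) →
    ∀ x, ∃ m : ℤ, H x = (m : ℝ) := by
  induction n with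
  | zero =>
    intro V _ _ T _ hcard _ _ a c H Ha _ x
    obtain ⟨z, hz⟩ := Fintype.card_eq_one_iff.mp hcard
    refine ⟨0, ?_⟩
    rw [show x = a from (hz x).trans (hz a).symm, Ha]; norm_num
  | succ n ih =>
    intro V _ _ T _ hcard hconn hedge a c H Ha heq
    -- every vertex has positive degree
    have hdegpos : ∀ v : V, 1 ≤ T.degree v := by
      intro v
      obtain ⟨w, hw⟩ := Fintype.exists_ne_of_one_lt_card (by omega) v
      obtain ⟨wk⟩ := hconn v w
      cases wk with
      | nil => exact absurd rfl hw.symm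
      | cons h _ =>
        have := T.degree_pos_iff_exists_adj v |>.mpr ⟨_, h⟩
        omega
    -- find a leaf ℓ ≠ a
    have hleaf : ∃ ℓ, ℓ ≠ a ∧ T.degree ℓ = 1 := by
      by_contra hcon
      push_neg at hcon
      have h2 : ∀ v ∈ univ.erase a, 2 ≤ T.degree v := by
        intro v hv
        have hv' := Finset.ne_of_mem_erase hv
        have := hcon v hv'
        have := hdegpos v
        omega
      have hsum := T.sum_degrees_eq_twice_card_edges
      have hbig := Finset.card_nsmul_le_sum (univ.erase a) _ _ h2
      have hcarde : (univ.erase a).card = n + 1 := by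
        rw [Finset.card_erase_of_mem (mem_univ a), Finset.card_univ, hcard]
        omega
      have hsplit := Finset.add_sum_erase univ (fun v => T.degree v) (mem_univ a)
      have hsplit' : T.degree a + ∑ x ∈ univ.erase a, T.degree x = ∑ v : V, T.degree v := hsplit
      have := hdegpos a
      rw [hedge] at hsum
      rw [hcarde] at hbig
      simp only [smul_eq_mul] at hbig
      omega
    obtain ⟨ℓ, hla, hdegℓ⟩ := hleaf
    obtain ⟨p, hp⟩ := Finset.card_eq_one.mp (by rw [← T.card_neighborFinset_eq_degree] at hdegℓ; exact hdegℓ)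
    have hadjℓp : T.Adj ℓ p := by
      rw [← mem_neighborFinset, hp]; exact Finset.mem_singleton_self p
    have hpl : p ≠ ℓ := fun h => T.loopless.irrefl ℓ (h ▸ hadjℓp)
    -- the pruned graph
    let T' : SimpleGraph {v : V // v ≠ ℓ} := T.comap Subtype.val
    haveI : DecidableRel T'.Adj := fun u v => ‹DecidableRel T.Adj› u.val v.val
    have hadj' : ∀ u v : {v : V // v ≠ ℓ}, T'.Adj u v ↔ T.Adj u.val v.val := fun _ _ => Iff.rfl
    have hcard' : Fintype.card {v : V // v ≠ ℓ} = n + 1 := by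
      have := Fintype.card_subtype_compl (fun v : V => v = ℓ)
      simp only [Fintype.card_subtype_eq] at this
      have h : Fintype.card {v : V // v ≠ ℓ} = Fintype.card {v : V // ¬ v = ℓ} := rfl
      rw [h, this, hcard]
      omega
    -- neighbor finsets in the pruned graph
    have hnbr : ∀ x : {v : V // v ≠ ℓ},
        (T'.neighborFinset x).map ⟨Subtype.val, Subtype.val_injective⟩
          = (T.neighborFinset x.val).erase ℓ := by
      intro x
      ext y
      simp only [Finset.mem_map, mem_neighborFinset, Finset.mem_erase,
        Function.Embedding.coeFn_mk]
      constructor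
      · rintro ⟨z, hz, rfl⟩; exact ⟨z.2, hz⟩
      · rintro ⟨hy, hadj⟩; exact ⟨⟨y, hy⟩, hadj, rfl⟩
    have hsum' : ∀ (x : {v : V // v ≠ ℓ}) (f : V → ℝ),
        ∑ y ∈ T'.neighborFinset x, f y.val = ∑ y ∈ (T.neighborFinset x.val).erase ℓ, f y := by
      intro x f
      rw [← hnbr x, Finset.sum_map]
      rfl
    have hmemℓ : ∀ x : {v : V // v ≠ ℓ}, ℓ ∈ T.neighborFinset x.val ↔ x.val = p := by
      intro x
      rw [mem_neighborFinset]
      constructor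
      · intro h
        have : x.val ∈ T.neighborFinset ℓ := (mem_neighborFinset _ _ _).mpr h.symm
        rw [hp] at this
        exact Finset.mem_singleton.mp this
      · intro h; rw [h]; exact hadjℓp.symm
    have hdeg' : ∀ x : {v : V // v ≠ ℓ},
        T'.degree x = ((T.neighborFinset x.val).erase ℓ).card := by
      intro x
      rw [← T'.card_neighborFinset_eq_degree, ← hnbr x, Finset.card_map]
    -- connectivity of the pruned graph
    have reach : ∀ (m : ℕ) (u v : V) (hu : u ≠ ℓ) (hv : v ≠ ℓ) (w : T.Walk u v),
        w.length ≤ m → T'.Reachable ⟨u, hu⟩ ⟨v, hv⟩ := by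
      intro m
      induction m with
      | zero =>
        intro u v hu hv w hw
        have huv : u = v := w.eq_of_length_eq_zero (Nat.le_zero.mp hw)
        subst huv
        exact Reachable.refl _
      | succ m ihm =>
        intro u v hu hv w hw
        cases w with
        | nil => exact Reachable.refl _
        | cons h w' =>
          rename_i u'
          by_cases hu' : u' = ℓ
          · cases w' with
            | nil => exact absurd hu' hv
            | cons h2 w'' =>
              rename_i u''
              rw [hu'] at h h2
              have hup : u = p := by
                have : u ∈ T.neighborFinset ℓ := (mem_neighborFinset _ _ _).mpr h.symm
                rw [hp] at this; exact Finset.mem_singleton.mp this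
              have hu''p : u'' = p := by
                have : u'' ∈ T.neighborFinset ℓ := (mem_neighborFinset _ _ _).mpr h2
                rw [hp] at this; exact Finset.mem_singleton.mp this
              subst hup
              subst hu''p
              apply ihm _ v hu hv w''
              simp only [SimpleGraph.Walk.length_cons] at hw
              omega
          · have hadj : T'.Adj ⟨u, hu⟩ ⟨u', hu'⟩ := h
            refine hadj.reachable.trans (ihm u' v hu' hv w' ?_)
            simp only [SimpleGraph.Walk.length_cons] at hw
            omega
    haveI : Nonempty {v : V // v ≠ ℓ} := ⟨⟨a, hla.symm⟩⟩
    have hconn' : T'.Connected := by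
      apply SimpleGraph.Connected.mk
      intro u v
      obtain ⟨w⟩ := hconn u.val v.val
      have := reach w.length u.val v.val u.2 v.2 w le_rfl
      simpa using this
    -- edge count of the pruned graph
    have hdegsum : ∀ x : {v : V // v ≠ ℓ},
        T'.degree x + (if x.val = p then 1 else 0) = T.degree x.val := by
      intro x
      rw [hdeg', ← T.card_neighborFinset_eq_degree]
      by_cases hx : x.val = p
      · rw [if_pos hx]
        exact Finset.card_erase_add_one ((hmemℓ x).mpr hx)
      · rw [if_neg hx, Finset.erase_eq_of_notMem (fun hm => hx ((hmemℓ x).mp hm))]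
        omega
    have hedge' : T'.edgeFinset.card = n := by
      have hs1 : ∑ x : {v : V // v ≠ ℓ}, T'.degree x = 2 * T'.edgeFinset.card :=
        T'.sum_degrees_eq_twice_card_edges
      have hs2 : ∑ x : {v : V // v ≠ ℓ}, T.degree x.val
          = ∑ v ∈ univ.erase ℓ, T.degree v := by
        exact (Finset.sum_subtype (univ.erase ℓ) (by intro x; simp) (fun v => T.degree v)).symm
      have hs3 : T.degree ℓ + ∑ v ∈ univ.erase ℓ, T.degree v = ∑ v : V, T.degree v :=
        Finset.add_sum_erase univ (fun v => T.degree v) (mem_univ ℓ)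
      have hs4 : ∑ v : V, T.degree v = 2 * T.edgeFinset.card :=
        T.sum_degrees_eq_twice_card_edges
      have hs5 : ∑ x : {v : V // v ≠ ℓ}, (T'.degree x + (if x.val = p then 1 else 0))
          = ∑ x : {v : V // v ≠ ℓ}, T.degree x.val := by
        exact Finset.sum_congr rfl (fun x _ => hdegsum x)
      have hs6 : ∑ x : {v : V // v ≠ ℓ}, (if x.val = p then 1 else 0) = 1 := by
        have hrw : ∀ x : {v : V // v ≠ ℓ}, (if x.val = p then (1:ℕ) else 0)
            = if x = ⟨p, hpl⟩ then 1 else 0 := by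
          intro x
          by_cases h : x = ⟨p, hpl⟩
          · subst h; simp
          · rw [if_neg h, if_neg (fun hc => h (Subtype.ext hc))]
        rw [Finset.sum_congr rfl fun x _ => hrw x, Finset.sum_ite_eq' univ]
        simp
      rw [Finset.sum_add_distrib, hs1, hs6] at hs5
      rw [hs2] at hs5
      omega
    -- hitting equation at ℓ
    have hHℓ : H ℓ = (c ℓ : ℝ) + H p := by
      have h0 := heq ℓ hla
      rw [hdegℓ, hp, Finset.sum_singleton] at h0
      simpa using h0
    -- transported data
    have heq' : ∀ x : {v : V // v ≠ ℓ}, x ≠ (⟨a, hla.symm⟩ : {v : V // v ≠ ℓ}) →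
        (T'.degree x : ℝ) * H x.val
          = ((c x.val + if x.val = p then c ℓ else 0 : ℤ) : ℝ)
            + ∑ y ∈ T'.neighborFinset x, H y.val := by
      intro x hx
      have hxa : x.val ≠ a := fun h => hx (Subtype.ext h)
      have horig := heq x.val hxa
      have hsx : ∑ y ∈ T'.neighborFinset x, H y.val
          = ∑ y ∈ (T.neighborFinset x.val).erase ℓ, H y := hsum' x _
      by_cases hxp : x.val = p
      · have hmem : ℓ ∈ T.neighborFinset x.val := (hmemℓ x).mpr hxp
        have hsplit2 : H ℓ + ∑ y ∈ (T.neighborFinset x.val).erase ℓ, H y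
            = ∑ y ∈ T.neighborFinset x.val, H y := Finset.add_sum_erase _ _ hmem
        have hd : T'.degree x + 1 = T.degree x.val := by
          have h1 := hdegsum x; rw [if_pos hxp] at h1; omega
        have hd' : (T'.degree x : ℝ) = (T.degree x.val : ℝ) - 1 := by
          rw [← hd]; push_cast; ring
        have hHℓ' : H ℓ = (c ℓ : ℝ) + H x.val := by rw [hHℓ, hxp]
        rw [hsx, hd', if_pos hxp]
        rw [← hsplit2, hHℓ'] at horig
        push_cast
        push_cast at horig
        nlinarith [horig]
      · have hnm : ℓ ∉ T.neighborFinset x.val := fun hm => hxp ((hmemℓ x).mp hm)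
        have herase : (T.neighborFinset x.val).erase ℓ = T.neighborFinset x.val :=
          Finset.erase_eq_of_notMem hnm
        have hd : T'.degree x = T.degree x.val := by
          have h1 := hdegsum x; rw [if_neg hxp] at h1; omega
        rw [hsx, herase, hd, if_neg hxp]
        simpa using horig
    have hint' := ih T' hcard' hconn' hedge' ⟨a, hla.symm⟩
      (fun v => c v.val + if v.val = p then c ℓ else 0) (fun v => H v.val)
      Ha heq'
    intro x
    by_cases hx : x = ℓ
    · subst hx
      obtain ⟨m, hm⟩ := hint' ⟨p, hpl⟩
      have hm' : H p = (m : ℝ) := hm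
      refine ⟨c x + m, ?_⟩
      rw [hHℓ, hm']
      push_cast
      ring
    · exact hint' ⟨x, hx⟩

/-- `IsHittingTime G a H` : `H` satisfies the linear system characterizing the expected
hitting times of the absorbing vertex `a` for the simple random walk on `G`. -/
def IsHittingTime {V : Type*} [Fintype V] (G : SimpleGraph V) [DecidableRel G.Adj]
    (a : V) (H : V → ℝ) : Prop :=
  H a = 0 ∧ ∀ x, x ≠ a →
    (G.degree x : ℝ) * H x = (G.degree x : ℝ) + ∑ y ∈ G.neighborFinset x, H y

/-- For a simple random walk on a finite tree, all hitting times `H(x,y)` are integers. -/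
theorem tree_hitting_times_integer {V : Type*} [Fintype V]
    (T : SimpleGraph V) [DecidableRel T.Adj] (htree : T.IsTree)
    (y : V) (H : V → ℝ) (hH : IsHittingTime T y H) (x : V) :
    ∃ n : ℤ, H x = n := by
  classical
  obtain ⟨hH0, hHeq⟩ := hH
  have hconn := htree.isConnected
  haveI : Nonempty V := hconn.nonempty
  have hcard : 1 ≤ Fintype.card V := Fintype.card_pos
  have hedge := htree.card_edgeFinset
  exact tree_key (Fintype.card V - 1) T (by omega) hconn (by omega) y
    (fun v => (T.degree v : ℤ)) H hH0
    (fun x hx => by push_cast; exact hHeq x hx) x
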